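/- For a discrete random variable e with values in a finite set and any random variable z: min over conditional kernels D of E[−log D(e | z)] equals H(e) − I(e; z), where I(e; z) is the mutual information. Hence maximizing this minimum over encoders producing z is equivalent to minimizing I(e; z), and the supremum value H(e) is attained iff z is independent of e. -/

import Mathlib

lemma gibbs_term_le {p q : ℝ} (hp : 0 < p) (hq : 0 < q) :
    p * Real.log (q / p) ≤ q - p := by
  have h := Real.log_le_sub_one_of_pos (div_pos hq hp)
  have h2 : p * Real.log (q / p) ≤ p * (q / p - 1) :=
    mul_le_mul_of_nonneg_left h hp.le
  have h3 : p * (q / p - 1) = q - p := by field_simp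
  linarith

lemma gibbs_term_eq {p q : ℝ} (hp : 0 < p) (hq : 0 < q)
    (h : p * Real.log (q / p) = q - p) : p = q := by
  by_contra hne
  have hx : q / p ≠ 1 := by
    intro h1
    exact hne ((div_eq_one_iff_eq hp.ne').mp h1).symm
  have := Real.log_lt_sub_one_of_pos (div_pos hq hp) hx
  have h2 : p * Real.log (q / p) < p * (q / p - 1) :=
    (mul_lt_mul_iff_right₀ hp).mpr this
  have h3 : p * (q / p - 1) = q - p := by field_simp
  linarith

open Finset in
/-- The minimum over conditional kernels `D` of the population cross-entropy
`E[-log D (e | z)]` equals `H(e) - I(e; z)`, and this minimum equals `H(e)`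
iff `e` and `z` are independent. (Finite joint distribution `p` of `(e, z)`,
assumed strictly positive so that the Bayes-optimal kernel is admissible.) -/
theorem stmt_5 {E Z : Type*} [Fintype E] [Fintype Z] [Nonempty E] [Nonempty Z]
    (p : E → Z → ℝ) (hp0 : ∀ e z, 0 < p e z) (hp1 : ∑ e, ∑ z, p e z = 1) :
    IsLeast
      {c : ℝ | ∃ D : Z → E → ℝ, (∀ z e, 0 < D z e) ∧ (∀ z, ∑ e, D z e = 1) ∧
        c = ∑ z, ∑ e, p e z * (-Real.log (D z e))}
      ((-∑ e, (∑ z, p e z) * Real.log (∑ z, p e z)) -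
        ∑ e, ∑ z, p e z *
          Real.log (p e z / ((∑ z', p e z') * (∑ e', p e' z)))) ∧
    (((-∑ e, (∑ z, p e z) * Real.log (∑ z, p e z)) -
        ∑ e, ∑ z, p e z *
          Real.log (p e z / ((∑ z', p e z') * (∑ e', p e' z)))) =
        (-∑ e, (∑ z, p e z) * Real.log (∑ z, p e z)) ↔
      ∀ e z, p e z = (∑ z', p e z') * (∑ e', p e' z)) := by
  set pE : E → ℝ := fun e => ∑ z, p e z with hpEdef
  set pZ : Z → ℝ := fun z => ∑ e, p e z with hpZdef
  have hpE : ∀ e, 0 < pE e := fun e =>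
    Finset.sum_pos (fun z _ => hp0 e z) Finset.univ_nonempty
  have hpZ : ∀ z, 0 < pZ z := fun z =>
    Finset.sum_pos (fun e _ => hp0 e z) Finset.univ_nonempty
  have hpE1 : ∑ e, pE e = 1 := hp1
  have hpZ1 : ∑ z, pZ z = 1 := by
    rw [hpZdef]; rw [Finset.sum_comm]; exact hp1
  -- key: the claimed value equals the cross-entropy of the posterior kernel
  have key :
      ((-∑ e, pE e * Real.log (pE e)) -
        ∑ e, ∑ z, p e z * Real.log (p e z / (pE e * pZ z)))
      = ∑ z, ∑ e, p e z * (-Real.log (p e z / pZ z)) := by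
    rw [Finset.sum_comm (γ := Z)]
    have h1 : ∀ e, pE e * Real.log (pE e) = ∑ z, p e z * Real.log (pE e) :=
      fun e => Finset.sum_mul Finset.univ (fun z => p e z) (Real.log (pE e))
    simp_rw [h1]
    rw [← Finset.sum_neg_distrib, ← Finset.sum_sub_distrib]
    refine Finset.sum_congr rfl fun e _ => ?_
    rw [← Finset.sum_neg_distrib, ← Finset.sum_sub_distrib]
    refine Finset.sum_congr rfl fun z _ => ?_
    rw [Real.log_div (hp0 e z).ne' (mul_pos (hpE e) (hpZ z)).ne',
      Real.log_mul (hpE e).ne' (hpZ z).ne',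
      Real.log_div (hp0 e z).ne' (hpZ z).ne']
    ring
  constructor
  · constructor
    · -- membership: take the posterior kernel
      refine ⟨fun z e => p e z / pZ z, fun z e => div_pos (hp0 e z) (hpZ z),
        fun z => ?_, key⟩
      rw [← Finset.sum_div, div_eq_one_iff_eq (hpZ z).ne']
    · -- lower bound
      rintro c ⟨D, hD0, hD1, rfl⟩
      rw [key]
      rw [← sub_nonneg]
      have step : ∀ z, ∑ e, (p e z - D z e * pZ z) ≤
          ∑ e, (p e z * (-Real.log (D z e)) - p e z * (-Real.log (p e z / pZ z))) := by
        intro z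
        refine Finset.sum_le_sum fun e _ => ?_
        have hq : 0 < D z e * pZ z := mul_pos (hD0 z e) (hpZ z)
        have h := gibbs_term_le (hp0 e z) hq
        have hlog : Real.log (D z e * pZ z / p e z) =
            Real.log (D z e) - Real.log (p e z / pZ z) := by
          rw [Real.log_div hq.ne' (hp0 e z).ne',
            Real.log_mul (hD0 z e).ne' (hpZ z).ne',
            Real.log_div (hp0 e z).ne' (hpZ z).ne']
          ring
        rw [hlog] at h
        nlinarith [hp0 e z]
      have inner : ∀ z, ∑ e, (p e z - D z e * pZ z) = 0 := by
        intro z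
        rw [Finset.sum_sub_distrib, ← Finset.sum_mul, hD1 z, one_mul]
        simp [hpZdef]
      calc (0 : ℝ) = ∑ z, ∑ e, (p e z - D z e * pZ z) := by simp [inner]
        _ ≤ ∑ z, ∑ e, (p e z * (-Real.log (D z e)) -
              p e z * (-Real.log (p e z / pZ z))) :=
            Finset.sum_le_sum fun z _ => step z
        _ = _ := by simp_rw [Finset.sum_sub_distrib]
  · -- equality iff independence
    rw [sub_eq_self]
    constructor
    · intro h e₀ z₀
      -- turn into sum over product type
      have hflip : ∑ e, ∑ z, p e z * Real.log ((pE e * pZ z) / p e z) = 0 := by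
        have : ∀ e z, p e z * Real.log ((pE e * pZ z) / p e z) =
            -(p e z * Real.log (p e z / (pE e * pZ z))) := by
          intro e z
          have hli : Real.log (pE e * pZ z / p e z) =
              -Real.log (p e z / (pE e * pZ z)) := by
            rw [← Real.log_inv, inv_div]
          rw [hli]; ring
        simp_rw [this, Finset.sum_neg_distrib]
        rw [h, neg_zero]
      have hqsum : ∑ e, ∑ z, (pE e * pZ z - p e z) = 0 := by
        simp_rw [Finset.sum_sub_distrib, ← Finset.mul_sum, hpZ1, mul_one]
        norm_num [hpE1, hp1, hpEdef]
      have hle : ∀ x : E × Z, x ∈ Finset.univ →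
          p x.1 x.2 * Real.log ((pE x.1 * pZ x.2) / p x.1 x.2) ≤
            pE x.1 * pZ x.2 - p x.1 x.2 := fun x _ =>
        gibbs_term_le (hp0 x.1 x.2) (mul_pos (hpE x.1) (hpZ x.2))
      have hsum : ∑ x : E × Z, p x.1 x.2 * Real.log ((pE x.1 * pZ x.2) / p x.1 x.2)
          = ∑ x : E × Z, (pE x.1 * pZ x.2 - p x.1 x.2) := by
        rw [Fintype.sum_prod_type, Fintype.sum_prod_type, hflip, hqsum]
      have heq := (Finset.sum_eq_sum_iff_of_le hle).mp hsum (e₀, z₀) (Finset.mem_univ _)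
      exact gibbs_term_eq (hp0 e₀ z₀) (mul_pos (hpE e₀) (hpZ z₀)) heq
    · intro h
      have : ∀ e z, p e z * Real.log (p e z / (pE e * pZ z)) = 0 := by
        intro e z
        rw [h e z, div_self (mul_pos (hpE e) (hpZ z)).ne', Real.log_one, mul_zero]
      exact Finset.sum_eq_zero fun e _ => Finset.sum_eq_zero fun z _ => this e z
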